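/- For every si-logic L, the finite Kripke frames validating the largest modal companion σ(L) = Grz + {φ^t : φ ∈ L} are exactly the finite partial orders validating L: a finite Kripke frame (W, R) validates σ(L) if and only if R is a partial order on W and the poset (W, R) validates L as an intuitionistic Kripke frame. -/
import Mathlib


/-- Intuitionistic propositional formulas over variables `p₀, p₁, …`. -/
inductive IForm : Type
  | var : ℕ → IForm
  | bot : IForm
  | and : IForm → IForm → IForm
  | or : IForm → IForm → IForm
  | imp : IForm → IForm → IForm

namespace IForm

/-- Uniform substitution. -/
def subst (σ : ℕ → IForm) : IForm → IForm
  | var n => σ n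
  | bot => bot
  | and φ ψ => and (subst σ φ) (subst σ ψ)
  | or φ ψ => or (subst σ φ) (subst σ ψ)
  | imp φ ψ => imp (subst σ φ) (subst σ ψ)

/-- Biconditional `φ ↔ ψ`. -/
def biimp (φ ψ : IForm) : IForm := and (imp φ ψ) (imp ψ φ)

end IForm

/-- The theorems of the intuitionistic propositional calculus `IPC`, given by a
standard Hilbert-style axiomatization (all axioms are schemes, so `IPC` is
closed under uniform substitution) together with modus ponens. -/
inductive IPC : IForm → Prop
  | ax1 (φ ψ : IForm) : IPC (φ.imp (ψ.imp φ))
  | ax2 (φ ψ χ : IForm) : IPC ((φ.imp (ψ.imp χ)).imp ((φ.imp ψ).imp (φ.imp χ)))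
  | andE1 (φ ψ : IForm) : IPC ((φ.and ψ).imp φ)
  | andE2 (φ ψ : IForm) : IPC ((φ.and ψ).imp ψ)
  | andI (φ ψ : IForm) : IPC (φ.imp (ψ.imp (φ.and ψ)))
  | orI1 (φ ψ : IForm) : IPC (φ.imp (φ.or ψ))
  | orI2 (φ ψ : IForm) : IPC (ψ.imp (φ.or ψ))
  | orE (φ ψ χ : IForm) : IPC ((φ.imp χ).imp ((ψ.imp χ).imp ((φ.or ψ).imp χ)))
  | exfalso (φ : IForm) : IPC (IForm.bot.imp φ)
  | mp (φ ψ : IForm) : IPC (φ.imp ψ) → IPC φ → IPC ψ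

/-- A superintuitionistic logic: a set of formulas containing `IPC` and closed
under modus ponens and uniform substitution. -/
def SuperIntuitionistic (L : Set IForm) : Prop :=
  (∀ φ, IPC φ → φ ∈ L) ∧
  (∀ φ ψ, φ.imp ψ ∈ L → φ ∈ L → ψ ∈ L) ∧
  (∀ φ (σ : ℕ → IForm), φ ∈ L → φ.subst σ ∈ L)
/-- Modal formulas over variables `p₀, p₁, …`. -/
inductive MForm : Type
  | var : ℕ → MForm
  | bot : MForm
  | and : MForm → MForm → MForm
  | or : MForm → MForm → MForm
  | imp : MForm → MForm → MForm
  | box : MForm → MForm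

namespace MForm

/-- Uniform substitution. -/
def subst (σ : ℕ → MForm) : MForm → MForm
  | var n => σ n
  | bot => bot
  | and φ ψ => and (subst σ φ) (subst σ ψ)
  | or φ ψ => or (subst σ φ) (subst σ ψ)
  | imp φ ψ => imp (subst σ φ) (subst σ ψ)
  | box φ => box (subst σ φ)

end MForm

/-- Classical evaluation of a modal formula, treating variables and boxed
formulas as atoms. -/
def MBoolEval (v : ℕ → Prop) (b : MForm → Prop) : MForm → Prop
  | .var n => v n
  | .bot => False
  | .and φ ψ => MBoolEval v b φ ∧ MBoolEval v b ψ
  | .or φ ψ => MBoolEval v b φ ∨ MBoolEval v b ψ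
  | .imp φ ψ => MBoolEval v b φ → MBoolEval v b ψ
  | .box φ => b φ

/-- Classical propositional tautologies in the modal language. -/
def MTaut (φ : MForm) : Prop := ∀ v b, MBoolEval v b φ

/-- A normal modal logic: contains all classical tautologies and the axiom
`□(p→q) → (□p→□q)`, and is closed under modus ponens, uniform substitution,
and necessitation. -/
def NormalModal (L : Set MForm) : Prop :=
  (∀ φ, MTaut φ → φ ∈ L) ∧
  ((MForm.box ((MForm.var 0).imp (MForm.var 1))).imp
      ((MForm.box (MForm.var 0)).imp (MForm.box (MForm.var 1))) ∈ L) ∧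
  (∀ φ ψ, φ.imp ψ ∈ L → φ ∈ L → ψ ∈ L) ∧
  (∀ φ (σ : ℕ → MForm), φ ∈ L → φ.subst σ ∈ L) ∧
  (∀ φ, φ ∈ L → φ.box ∈ L)

/-- `M + Ax`: the least normal modal logic containing `M ∪ Ax`. -/
def ModalPlus (M Ax : Set MForm) : Set MForm :=
  {φ | ∀ L : Set MForm, NormalModal L → M ⊆ L → Ax ⊆ L → φ ∈ L}

/-- The least normal modal logic `K`. -/
def ModalK : Set MForm := {φ | ∀ L : Set MForm, NormalModal L → φ ∈ L}

/-- `K4 = K + (□p → □□p)`. -/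
def ModalK4 : Set MForm :=
  ModalPlus ModalK {(MForm.box (MForm.var 0)).imp (MForm.box (MForm.box (MForm.var 0)))}

/-- `S4 = K4 + (□p → p)`. -/
def ModalS4 : Set MForm :=
  ModalPlus ModalK4 {(MForm.box (MForm.var 0)).imp (MForm.var 0)}

/-- `Grz = S4 + (□(□(p → □p) → p) → □p)`. -/
def ModalGrz : Set MForm :=
  ModalPlus ModalS4
    {(MForm.box ((MForm.box ((MForm.var 0).imp (MForm.box (MForm.var 0)))).imp
        (MForm.var 0))).imp (MForm.box (MForm.var 0))}

/-- Kripke forcing for modal formulas on a frame `(W, R)`. -/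
def MForces {W : Type} (R : W → W → Prop) (v : ℕ → Set W) : W → MForm → Prop
  | w, .var n => w ∈ v n
  | _, .bot => False
  | w, .and φ ψ => MForces R v w φ ∧ MForces R v w ψ
  | w, .or φ ψ => MForces R v w φ ∨ MForces R v w ψ
  | w, .imp φ ψ => MForces R v w φ → MForces R v w ψ
  | w, .box φ => ∀ u, R w u → MForces R v u φ

/-- Validity of a modal formula in a Kripke frame. -/
def MValidIn (W : Type) (R : W → W → Prop) (φ : MForm) : Prop :=
  ∀ (v : ℕ → Set W) (w : W), MForces R v w φ

/-- A frame validates a logic if every formula of the logic is valid in it. -/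
def MValidLogic (W : Type) (R : W → W → Prop) (L : Set MForm) : Prop :=
  ∀ φ ∈ L, MValidIn W R φ

/-- `Fin(L) = Fin(L')`: the two modal logics are validated by the same finite
Kripke frames. -/
def MSameFin (L L' : Set MForm) : Prop :=
  ∀ (W : Type) [Fintype W] (R : W → W → Prop), MValidLogic W R L ↔ MValidLogic W R L'

/-- `fmp_M(L) = {L' ∈ NExt M : Fin(L') = Fin(L)}`. -/
def modalFmpSpan (M L : Set MForm) : Set (Set MForm) :=
  {L' | NormalModal L' ∧ M ⊆ L' ∧ MSameFin L L'}

/-- `deg_M(L)`: the degree of fmp of `L` over `M`. -/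
def modalDeg (M L : Set MForm) : Cardinal := Cardinal.mk (modalFmpSpan M L)

/-- The Gödel translation of intuitionistic formulas into modal formulas. -/
def godel : IForm → MForm
  | .var n => .box (.var n)
  | .bot => .bot
  | .and φ ψ => .and (godel φ) (godel ψ)
  | .or φ ψ => .or (godel φ) (godel ψ)
  | .imp φ ψ => .box ((godel φ).imp (godel ψ))

/-- The largest modal companion `σ(L) = Grz + {φ^t : φ ∈ L}` of an si-logic. -/
def sigmaCompanion (L : Set IForm) : Set MForm :=
  ModalPlus ModalGrz (godel '' L)

/-- Intuitionistic Kripke forcing over a binary relation. -/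
def IForcesRel {W : Type} (R : W → W → Prop) (v : ℕ → Set W) : W → IForm → Prop
  | w, .var n => w ∈ v n
  | _, .bot => False
  | w, .and φ ψ => IForcesRel R v w φ ∧ IForcesRel R v w ψ
  | w, .or φ ψ => IForcesRel R v w φ ∨ IForcesRel R v w ψ
  | w, .imp φ ψ => ∀ u, R w u → IForcesRel R v u φ → IForcesRel R v u ψ

/-- Intuitionistic validity on the frame `(W, R)` (valuations by `R`-upsets). -/
def IValidRel (W : Type) (R : W → W → Prop) (φ : IForm) : Prop :=
  ∀ v : ℕ → Set W, (∀ n, ∀ a b, R a b → a ∈ v n → b ∈ v n) →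
    ∀ w : W, IForcesRel R v w φ

section Aux

variable {W : Type} (R : W → W → Prop)

lemma MForces_subst_aux (v : ℕ → Set W) (σ : ℕ → MForm) :
    ∀ (φ : MForm) (w : W), MForces R v w (φ.subst σ) ↔
      MForces R (fun n => {u | MForces R v u (σ n)}) w φ := by
  intro φ
  induction φ <;> intro w <;>
    simp only [MForm.subst, MForces, Set.mem_setOf_eq, *]

lemma MForces_of_taut (φ : MForm) (h : MTaut φ) (v : ℕ → Set W) (w : W) :
    MForces R v w φ := by
  have key : ∀ ψ, MBoolEval (fun n => w ∈ v n)
      (fun ψ => ∀ u, R w u → MForces R v u ψ) ψ ↔ MForces R v w ψ := by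
    intro ψ; induction ψ <;> simp only [MBoolEval, MForces, *]
  exact (key φ).mp (h _ _)

lemma godel_forces (v : ℕ → Set W) :
    ∀ (φ : IForm) (w : W), MForces R v w (godel φ) ↔
      IForcesRel R (fun n => {u | ∀ t, R u t → t ∈ v n}) w φ := by
  intro φ
  induction φ <;> intro w <;>
    simp only [godel, MForces, IForcesRel, Set.mem_setOf_eq, *]

lemma normal_valid : NormalModal {φ | MValidIn W R φ} := by
  refine ⟨fun φ h v w => MForces_of_taut R φ h v w, ?_, ?_, ?_, ?_⟩
  · intro v w h1 h2 u hu
    exact h1 u hu (h2 u hu)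
  · intro φ ψ h1 h2 v w
    exact h1 v w (h2 v w)
  · intro φ σ h v w
    exact (MForces_subst_aux R v σ φ w).mpr (h _ w)
  · intro φ h v w u _
    exact h v u

lemma grz_valid [Fintype W]
    (hrefl : ∀ x, R x x) (htrans : ∀ x y z, R x y → R y z → R x z)
    (hanti : ∀ x y, R x y → R y x → x = y) :
    MValidIn W R ((MForm.box ((MForm.box ((MForm.var 0).imp
        (MForm.box (MForm.var 0)))).imp (MForm.var 0))).imp
      (MForm.box (MForm.var 0))) := by
  intro v w
  show (∀ u, R w u →
      ((∀ t, R u t → (t ∈ v 0 → ∀ s, R t s → s ∈ v 0)) → u ∈ v 0)) →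
    ∀ u, R w u → u ∈ v 0
  intro h
  have ht : IsTrans W (fun a b => R b a ∧ a ≠ b) := by
    refine ⟨fun a b c h1 h2 => ⟨htrans _ _ _ h2.1 h1.1, fun e => ?_⟩⟩
    subst e
    exact h1.2 (hanti _ _ h2.1 h1.1)
  have hi : IsIrrefl W (fun a b => R b a ∧ a ≠ b) := ⟨fun a ha => ha.2 rfl⟩
  have wf : WellFounded (fun a b : W => R b a ∧ a ≠ b) :=
    Finite.wellFounded_of_trans_of_irrefl _
  intro u
  induction u using WellFounded.induction wf with
  | _ u IH =>
    intro hwu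
    apply h u hwu
    intro t hut htv s hts
    by_cases hsu : s = u
    · subst hsu
      exact (hanti _ _ hts hut) ▸ htv
    · exact IH s ⟨htrans _ _ _ hut hts, fun e => hsu e⟩
        (htrans _ _ _ hwu (htrans _ _ _ hut hts))

end Aux

/-- **Theorem.** For every si-logic `L`, a finite Kripke frame `(W, R)`
validates `σ(L)` iff `R` is a partial order on `W` and the poset `(W, R)`
validates `L` as an intuitionistic Kripke frame. -/
theorem finite_frames_of_sigmaCompanion (L : Set IForm) (hL : SuperIntuitionistic L)
    (W : Type) [Fintype W] (R : W → W → Prop) :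
    MValidLogic W R (sigmaCompanion L) ↔
      ((∀ x, R x x) ∧ (∀ x y z, R x y → R y z → R x z) ∧
        (∀ x y, R x y → R y x → x = y) ∧ (∀ φ ∈ L, IValidRel W R φ)) := by
  constructor
  · intro hval
    -- membership facts
    have hTmem : (MForm.box (MForm.var 0)).imp (MForm.var 0) ∈ sigmaCompanion L :=
      fun L' _ hG _ => hG (fun L₂ _ hS4 _ => hS4 (fun L₁ _ _ hT => hT rfl))
    have h4mem : (MForm.box (MForm.var 0)).imp
        (MForm.box (MForm.box (MForm.var 0))) ∈ sigmaCompanion L :=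
      fun L' _ hG _ => hG (fun L₂ _ hS4 _ =>
        hS4 (fun L₁ _ hK4 _ => hK4 (fun L₀ _ _ h4 => h4 rfl)))
    have hGrzmem : (MForm.box ((MForm.box ((MForm.var 0).imp
        (MForm.box (MForm.var 0)))).imp (MForm.var 0))).imp
        (MForm.box (MForm.var 0)) ∈ sigmaCompanion L :=
      fun L' _ hG _ => hG (fun L₂ _ _ hgrz => hgrz rfl)
    have hT := hval _ hTmem
    have h4 := hval _ h4mem
    have hGrz := hval _ hGrzmem
    have hrefl : ∀ x, R x x := by
      intro x
      exact (hT (fun _ => {u | R x u}) x) (fun u hu => hu)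
    have htrans : ∀ x y z, R x y → R y z → R x z := by
      intro x y z hxy hyz
      exact (h4 (fun _ => {u | R x u}) x) (fun u hu => hu) y hxy z hyz
    have hanti : ∀ x y, R x y → R y x → x = y := by
      intro x y hxy hyx
      by_contra hne
      have hg := hGrz (fun _ => {u | u ≠ y}) x
      refine hg ?_ y hxy rfl
      intro u hxu H heq
      exact H x (heq ▸ hyx) hne y hxy rfl
    refine ⟨hrefl, htrans, hanti, ?_⟩
    intro φ hφ v hv w
    have hmem : godel φ ∈ sigmaCompanion L :=
      fun L' _ _ hg => hg ⟨φ, hφ, rfl⟩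
    have hf := (godel_forces R v φ w).mp (hval _ hmem v w)
    have hv' : (fun n => {u | ∀ t, R u t → t ∈ v n}) = v := by
      funext n; ext u
      exact ⟨fun h => h u (hrefl u), fun h t ht => hv n u t ht h⟩
    rwa [hv'] at hf
  · rintro ⟨hrefl, htrans, hanti, hIval⟩
    set V : Set MForm := {φ | MValidIn W R φ} with hVdef
    have hV : NormalModal V := normal_valid R
    have hTvalid : MValidIn W R ((MForm.box (MForm.var 0)).imp (MForm.var 0)) :=
      fun v w h => h w (hrefl w)
    have h4valid : MValidIn W R ((MForm.box (MForm.var 0)).imp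
        (MForm.box (MForm.box (MForm.var 0)))) :=
      fun v w h u hu s hs => h s (htrans _ _ _ hu hs)
    have hKV : ModalK ⊆ V := fun φ h => h V hV
    have hK4V : ModalK4 ⊆ V := fun φ h =>
      h V hV hKV (Set.singleton_subset_iff.mpr h4valid)
    have hS4V : ModalS4 ⊆ V := fun φ h =>
      h V hV hK4V (Set.singleton_subset_iff.mpr hTvalid)
    have hGrzV : ModalGrz ⊆ V := fun φ h =>
      h V hV hS4V (Set.singleton_subset_iff.mpr (grz_valid R hrefl htrans hanti))
    have hgV : godel '' L ⊆ V := by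
      rintro _ ⟨φ, hφ, rfl⟩
      intro v w
      refine (godel_forces R v φ w).mpr (hIval φ hφ _ ?_ w)
      intro n a b hab ha t hbt
      exact ha t (htrans _ _ _ hab hbt)
    intro φ hφ
    exact hφ V hV hGrzV hgV
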